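/- Interpolation inequality: if u ∈ C^{1,1}([0,s]) for some s > 0, then the sup norm of u' on [0,s] is bounded by 2·‖u‖_{L¹(0,s)}^{1/3}·‖u''‖_{L^∞(0,s)}^{2/3} + (4/s²)·‖u‖_{L¹(0,s)}. -/

import Mathlib

open Real MeasureTheory Set intervalIntegral

private lemma integral_quad (α β γ l r : ℝ) :
    (∫ y in l..r, (α + β*y + γ*y^2)) = α*(r-l) + β*(r^2-l^2)/2 + γ*(r^3-l^3)/3 := by
  have hd : ∀ y ∈ Set.uIcc l r, HasDerivAt (fun y : ℝ => α*y + (β/2*y^2 + γ/3*y^3))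
      (α + β*y + γ*y^2) y := by
    intro y _
    have h1 : HasDerivAt (fun y : ℝ => α * y) (α * 1) y := (hasDerivAt_id y).const_mul α
    have h2 : HasDerivAt (fun y : ℝ => β/2 * y^2) (β/2 * (2*y)) y := by
      simpa using (hasDerivAt_pow 2 y).const_mul (β/2)
    have h3 : HasDerivAt (fun y : ℝ => γ/3 * y^3) (γ/3 * (3*y^2)) y := by
      simpa using (hasDerivAt_pow 3 y).const_mul (γ/3)
    have h := h1.add (h2.add h3)
    refine h.congr_deriv ?_
    ring
  have hint : IntervalIntegrable (fun y : ℝ => α + β*y + γ*y^2) volume l r :=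
    Continuous.intervalIntegrable (by continuity) l r
  rw [intervalIntegral.integral_eq_sub_of_hasDerivAt hd hint]
  ring

private lemma int_lin (p q l r : ℝ) :
    (∫ y in l..r, (y - p)*(q - y)) =
      (-(p*q))*(r-l) + (p+q)*(r^2-l^2)/2 + (-1)*(r^3-l^3)/3 := by
  rw [intervalIntegral.integral_congr
    (g := fun y : ℝ => (-(p*q)) + (p+q)*y + (-1)*y^2) (fun y _ => by ring)]
  exact integral_quad _ _ _ l r

private lemma int_lin2 (p q l r : ℝ) :
    (∫ y in l..r, (y - p)*(y - q)) =
      (p*q)*(r-l) + (-(p+q))*(r^2-l^2)/2 + 1*(r^3-l^3)/3 := by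
  rw [intervalIntegral.integral_congr
    (g := fun y : ℝ => (p*q) + (-(p+q))*y + 1*y^2) (fun y _ => by ring)]
  exact integral_quad _ _ _ l r

private lemma int_lin0 (p l r : ℝ) :
    (∫ y in l..r, (y - p)) = (-p)*(r-l) + 1*(r^2-l^2)/2 + 0*(r^3-l^3)/3 := by
  rw [intervalIntegral.integral_congr
    (g := fun y : ℝ => (-p) + 1*y + 0*y^2) (fun y _ => by ring)]
  exact integral_quad _ _ _ l r

set_option maxHeartbeats 2000000 in
private lemma key (s : ℝ) (u u' : ℝ → ℝ) (Λ : NNReal)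
    (hderiv : ∀ x ∈ Set.Icc 0 s, HasDerivWithinAt u (u' x) (Set.Icc 0 s) x)
    (hlip : LipschitzOnWith Λ u' (Set.Icc 0 s))
    (a b x : ℝ) (ha : 0 ≤ a) (hb : b ≤ s) (hab : a < b) (hxa : a ≤ x) (hxb : x ≤ b) :
    |u' x| * ((b-a)^2/4) ≤ (∫ t in a..b, |u t|) + (Λ:ℝ) * (b-a)^3/8 := by
  have hΛ0 : (0:ℝ) ≤ (Λ:ℝ) := Λ.2
  have hIcc : Set.Icc a b ⊆ Set.Icc 0 s := Set.Icc_subset_Icc ha hb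
  have hxmem : x ∈ Set.Icc 0 s := hIcc ⟨hxa, hxb⟩
  have huc : ContinuousOn u (Set.Icc 0 s) := fun z hz => (hderiv z hz).continuousWithinAt
  have hu'c : ContinuousOn u' (Set.Icc 0 s) := hlip.continuousOn
  have hcu : ContinuousOn u (Set.Icc a b) := huc.mono hIcc
  have hcu' : ContinuousOn u' (Set.Icc a b) := hu'c.mono hIcc
  have intg : ∀ (f : ℝ → ℝ) (l r : ℝ), a ≤ l → l ≤ r → r ≤ b →
      ContinuousOn f (Set.Icc a b) → IntervalIntegrable f volume l r := by
    intro f l r h1 h2 h3 hf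
    apply ContinuousOn.intervalIntegrable
    rw [Set.uIcc_of_le h2]
    exact hf.mono (Set.Icc_subset_Icc h1 h3)
  have hcabs : ContinuousOn (fun t => |u t|) (Set.Icc a b) := hcu.abs
  have hcdiff : ContinuousOn (fun y => (y-a)*(u' y - u' x)) (Set.Icc a b) :=
    ((continuous_id.sub continuous_const).continuousOn).mul (hcu'.sub continuousOn_const)
  have hcdiff' : ContinuousOn (fun y => (b-y)*(u' y - u' x)) (Set.Icc a b) :=
    ((continuous_const.sub continuous_id).continuousOn).mul (hcu'.sub continuousOn_const)
  have hcp1 : ContinuousOn (fun y => (y-a)*u' y) (Set.Icc a b) :=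
    ((continuous_id.sub continuous_const).continuousOn).mul hcu'
  have hcp2 : ContinuousOn (fun y => (b-y)*u' y) (Set.Icc a b) :=
    ((continuous_const.sub continuous_id).continuousOn).mul hcu'
  have hcg1 : ContinuousOn (fun y => u y + (y-a)*u' y) (Set.Icc a b) := hcu.add hcp1
  have hcg2 : ContinuousOn (fun y => (b-y)*u' y - u y) (Set.Icc a b) := hcp2.sub hcu
  have hcpoly : ∀ f g : ℝ → ℝ, Continuous f → Continuous g →
      ContinuousOn (fun y => (Λ:ℝ)*(f y * g y)) (Set.Icc a b) :=
    fun f g hf hg => (continuous_const.mul (hf.mul hg)).continuousOn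
  have hac : a ≤ (a+b)/2 := by linarith
  have hcb : (a+b)/2 ≤ b := by linarith
  have hDA : ∀ y ∈ Set.Ioo a b, HasDerivAt u (u' y) y := by
    intro y hy
    have hy1 : 0 < y := lt_of_le_of_lt ha hy.1
    have hy2 : y < s := lt_of_lt_of_le hy.2 hb
    exact (hderiv y ⟨hy1.le, hy2.le⟩).hasDerivAt (Icc_mem_nhds hy1 hy2)
  -- integration by parts identities
  have e1 : (∫ y in a..(a+b)/2, (u y + (y-a)*u' y))
      = ((a+b)/2 - a) * u ((a+b)/2) - (a - a) * u a := by
    apply intervalIntegral.integral_eq_sub_of_hasDeriv_right_of_le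
      (f := fun y => (y - a) * u y) hac
    · exact (((continuous_id.sub continuous_const).continuousOn).mul
        (hcu.mono (Set.Icc_subset_Icc le_rfl hcb))).mono (by exact fun z hz => hz)
    · intro y hy
      have hy' : y ∈ Set.Ioo a b := ⟨hy.1, lt_of_lt_of_le hy.2 hcb⟩
      have h := ((hasDerivAt_id y).sub_const a).mul (hDA y hy')
      have h' : HasDerivAt (fun y => (y - a) * u y) (u y + (y-a)*u' y) y := by
        refine h.congr_deriv ?_; simp [id_eq]; try ring
      exact h'.hasDerivWithinAt
    · exact intg _ _ _ le_rfl hac hcb hcg1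
  have e2 : (∫ y in ((a+b)/2)..b, ((b-y)*u' y - u y))
      = (b - b) * u b - (b - (a+b)/2) * u ((a+b)/2) := by
    apply intervalIntegral.integral_eq_sub_of_hasDeriv_right_of_le
      (f := fun y => (b - y) * u y) hcb
    · exact (((continuous_const.sub continuous_id).continuousOn).mul
        (hcu.mono (Set.Icc_subset_Icc hac le_rfl))).mono (by exact fun z hz => hz)
    · intro y hy
      have hy' : y ∈ Set.Ioo a b := ⟨lt_of_le_of_lt hac hy.1, hy.2⟩
      have h := ((hasDerivAt_const y b).sub (hasDerivAt_id y)).mul (hDA y hy')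
      have h' : HasDerivAt (fun y => (b - y) * u y) ((b-y)*u' y - u y) y := by
        refine h.congr_deriv ?_; simp [id_eq]; try ring
      exact h'.hasDerivWithinAt
    · exact intg _ _ _ hac hcb le_rfl hcg2
  have a1 : (∫ y in a..(a+b)/2, (u y + (y-a)*u' y))
      = (∫ y in a..(a+b)/2, u y) + ∫ y in a..(a+b)/2, (y-a)*u' y :=
    intervalIntegral.integral_add (intg _ _ _ le_rfl hac hcb hcu)
      (intg _ _ _ le_rfl hac hcb hcp1)
  have a2 : (∫ y in ((a+b)/2)..b, ((b-y)*u' y - u y))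
      = (∫ y in ((a+b)/2)..b, (b-y)*u' y) - ∫ y in ((a+b)/2)..b, u y :=
    intervalIntegral.integral_sub (intg _ _ _ hac hcb le_rfl hcp2)
      (intg _ _ _ hac hcb le_rfl hcu)
  -- split off u' x
  have s1a : (∫ y in a..(a+b)/2, (y-a)*u' y)
      = ∫ y in a..(a+b)/2, ((y-a)*(u' y - u' x) + u' x * (y-a)) :=
    intervalIntegral.integral_congr (fun y _ => by ring)
  have s1b : (∫ y in a..(a+b)/2, ((y-a)*(u' y - u' x) + u' x * (y-a)))
      = (∫ y in a..(a+b)/2, (y-a)*(u' y - u' x)) + ∫ y in a..(a+b)/2, u' x * (y-a) :=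
    intervalIntegral.integral_add (intg _ _ _ le_rfl hac hcb hcdiff)
      (intg _ _ _ le_rfl hac hcb
        (continuousOn_const.mul ((continuous_id.sub continuous_const).continuousOn)))
  have s1c : (∫ y in a..(a+b)/2, u' x * (y-a)) = u' x * ∫ y in a..(a+b)/2, (y-a) :=
    intervalIntegral.integral_const_mul _ _
  rw [int_lin0 a a ((a+b)/2)] at s1c
  have s2a : (∫ y in ((a+b)/2)..b, (b-y)*u' y)
      = ∫ y in ((a+b)/2)..b, ((b-y)*(u' y - u' x) + u' x * (b-y)) :=
    intervalIntegral.integral_congr (fun y _ => by ring)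
  have s2b : (∫ y in ((a+b)/2)..b, ((b-y)*(u' y - u' x) + u' x * (b-y)))
      = (∫ y in ((a+b)/2)..b, (b-y)*(u' y - u' x)) + ∫ y in ((a+b)/2)..b, u' x * (b-y) :=
    intervalIntegral.integral_add (intg _ _ _ hac hcb le_rfl hcdiff')
      (intg _ _ _ hac hcb le_rfl
        (continuousOn_const.mul ((continuous_const.sub continuous_id).continuousOn)))
  have s2c : (∫ y in ((a+b)/2)..b, u' x * (b-y)) = u' x * ∫ y in ((a+b)/2)..b, (b-y) :=
    intervalIntegral.integral_const_mul _ _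
  have s2c' : (∫ y in ((a+b)/2)..b, (b-y)) = -∫ y in ((a+b)/2)..b, (y-b) := by
    rw [← intervalIntegral.integral_neg]
    exact intervalIntegral.integral_congr (fun y _ => by ring)
  rw [s2c', int_lin0 b ((a+b)/2) b] at s2c
  have T1 : (∫ y in a..(a+b)/2, (y-a)*(u' y - u' x))
      = ((a+b)/2 - a) * u ((a+b)/2) - (∫ y in a..(a+b)/2, u y)
        - u' x * ((-a)*((a+b)/2-a) + 1*(((a+b)/2)^2-a^2)/2 + 0*(((a+b)/2)^3-a^3)/3) := by
    have hz : (a - a) * u a = 0 := by ring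
    linarith [e1, a1, s1a, s1b, s1c, hz]
  have T2 : (∫ y in ((a+b)/2)..b, (b-y)*(u' y - u' x))
      = (∫ y in ((a+b)/2)..b, u y) - (b - (a+b)/2) * u ((a+b)/2)
        - u' x * (-((-b)*(b-(a+b)/2) + 1*(b^2-((a+b)/2)^2)/2 + 0*(b^3-((a+b)/2)^3)/3)) := by
    have hz : (b - b) * u b = 0 := by ring
    linarith [e2, a2, s2a, s2b, s2c, hz]
  have MAIN : u' x * ((b-a)^2/4)
      = ((∫ y in ((a+b)/2)..b, u y) - (∫ y in a..(a+b)/2, u y))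
        - (∫ y in a..(a+b)/2, (y-a)*(u' y - u' x))
        - (∫ y in ((a+b)/2)..b, (b-y)*(u' y - u' x)) := by
    linear_combination T1 + T2

  -- names for the four integrals
  set IA := ∫ y in a..(a+b)/2, u y with hIAdef
  set IB := ∫ y in ((a+b)/2)..b, u y with hIBdef
  set TL := ∫ y in a..(a+b)/2, (y-a)*(u' y - u' x) with hTLdef
  set TR := ∫ y in ((a+b)/2)..b, (b-y)*(u' y - u' x) with hTRdef
  have habsA : |IA| ≤ ∫ y in a..(a+b)/2, |u y| :=
    intervalIntegral.abs_integral_le_integral_abs hac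
  have habsB : |IB| ≤ ∫ y in ((a+b)/2)..b, |u y| :=
    intervalIntegral.abs_integral_le_integral_abs hcb
  have hsplit : (∫ y in a..(a+b)/2, |u y|) + (∫ y in ((a+b)/2)..b, |u y|)
      = ∫ t in a..b, |u t| :=
    intervalIntegral.integral_add_adjacent_intervals (intg _ _ _ le_rfl hac hcb hcabs)
      (intg _ _ _ hac hcb le_rfl hcabs)
  have hlipp : ∀ y ∈ Set.Icc a b, |u' y - u' x| ≤ (Λ:ℝ) * |y - x| := by
    intro y hy
    have hd := hlip.dist_le_mul y (hIcc hy) x hxmem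
    rwa [Real.dist_eq, Real.dist_eq] at hd
  have hbound : ∀ (l r : ℝ) (w m : ℝ → ℝ), a ≤ l → l ≤ r → r ≤ b →
      ContinuousOn w (Set.Icc a b) → ContinuousOn m (Set.Icc a b) →
      (∀ y ∈ Set.Icc l r, |w y * (u' y - u' x)| ≤ (Λ:ℝ) * m y) →
      |∫ y in l..r, w y * (u' y - u' x)| ≤ ∫ y in l..r, (Λ:ℝ) * m y := by
    intro l r w m h1 h2 h3 hw hm hp
    refine (intervalIntegral.abs_integral_le_integral_abs h2).trans ?_
    exact intervalIntegral.integral_mono_on h2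
      ((intg _ _ _ h1 h2 h3 (hw.mul (hcu'.sub continuousOn_const))).abs)
      (intg _ _ _ h1 h2 h3 (continuousOn_const.mul hm)) hp
  have hmulabs : |u' x| * ((b-a)^2/4) = |u' x * ((b-a)^2/4)| := by
    rw [abs_mul, abs_of_nonneg (by positivity : (0:ℝ) ≤ (b-a)^2/4)]
  have habs3 : |(IB - IA) - TL - TR| ≤ |IB| + |IA| + |TL| + |TR| := by
    have h0 : (IB - IA) - TL - TR = IB + -IA + -TL + -TR := by ring
    rw [h0]
    calc |IB + -IA + -TL + -TR| ≤ |IB + -IA + -TL| + |-TR| := abs_add_le _ _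
      _ ≤ |IB + -IA| + |-TL| + |-TR| := by linarith [abs_add_le (IB + -IA) (-TL)]
      _ ≤ |IB| + |-IA| + |-TL| + |-TR| := by linarith [abs_add_le IB (-IA)]
      _ = |IB| + |IA| + |TL| + |TR| := by rw [abs_neg, abs_neg, abs_neg]
  rcases le_total x ((a+b)/2) with hxc | hxc
  · -- x in the left half
    have tsplit : (∫ y in a..x, (y-a)*(u' y - u' x))
        + (∫ y in x..(a+b)/2, (y-a)*(u' y - u' x)) = TL :=
      intervalIntegral.integral_add_adjacent_intervals (intg _ _ _ le_rfl hxa hxb hcdiff)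
        (intg _ _ _ hxa hxc hcb hcdiff)
    have hb1 : |∫ y in a..x, (y-a)*(u' y - u' x)| ≤ ∫ y in a..x, (Λ:ℝ)*((y-a)*(x-y)) := by
      apply hbound a x (fun y => y - a) (fun y => (y-a)*(x-y)) le_rfl hxa hxb (by fun_prop) (by fun_prop)
      intro y hy
      beta_reduce
      have h1 := hlipp y ⟨hy.1, hy.2.trans hxb⟩
      rw [abs_of_nonpos (by linarith [hy.2] : y - x ≤ 0)] at h1
      rw [abs_mul, abs_of_nonneg (by linarith [hy.1] : (0:ℝ) ≤ y - a)]
      calc (y-a) * |u' y - u' x| ≤ (y-a) * ((Λ:ℝ)*(-(y-x))) :=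
            mul_le_mul_of_nonneg_left h1 (by linarith [hy.1])
        _ = (Λ:ℝ) * ((y-a)*(x-y)) := by ring
    have hb2 : |∫ y in x..(a+b)/2, (y-a)*(u' y - u' x)|
        ≤ ∫ y in x..(a+b)/2, (Λ:ℝ)*((y-a)*(y-x)) := by
      apply hbound x ((a+b)/2) (fun y => y - a) (fun y => (y-a)*(y-x)) hxa hxc hcb (by fun_prop) (by fun_prop)
      intro y hy
      beta_reduce
      have h1 := hlipp y ⟨hxa.trans hy.1, hy.2.trans hcb⟩
      rw [abs_of_nonneg (by linarith [hy.1] : (0:ℝ) ≤ y - x)] at h1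
      rw [abs_mul, abs_of_nonneg (by linarith [hxa, hy.1] : (0:ℝ) ≤ y - a)]
      calc (y-a) * |u' y - u' x| ≤ (y-a) * ((Λ:ℝ)*(y-x)) :=
            mul_le_mul_of_nonneg_left h1 (by linarith [hxa, hy.1])
        _ = (Λ:ℝ) * ((y-a)*(y-x)) := by ring
    have hb3 : |TR| ≤ ∫ y in ((a+b)/2)..b, (Λ:ℝ)*((y-x)*(b-y)) := by
      apply hbound ((a+b)/2) b (fun y => b - y) (fun y => (y-x)*(b-y)) hac hcb le_rfl (by fun_prop) (by fun_prop)
      intro y hy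
      beta_reduce
      have h1 := hlipp y ⟨hac.trans hy.1, hy.2⟩
      rw [abs_of_nonneg (by linarith [hy.1, hxc] : (0:ℝ) ≤ y - x)] at h1
      rw [abs_mul, abs_of_nonneg (by linarith [hy.2] : (0:ℝ) ≤ b - y)]
      calc (b-y) * |u' y - u' x| ≤ (b-y) * ((Λ:ℝ)*(y-x)) :=
            mul_le_mul_of_nonneg_left h1 (by linarith [hy.2])
        _ = (Λ:ℝ) * ((y-x)*(b-y)) := by ring
    have v1 : (∫ y in a..x, (Λ:ℝ)*((y-a)*(x-y)))
        = (Λ:ℝ) * ((-(a*x))*(x-a) + (a+x)*(x^2-a^2)/2 + (-1)*(x^3-a^3)/3) := by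
      rw [intervalIntegral.integral_const_mul, int_lin]
    have v2 : (∫ y in x..(a+b)/2, (Λ:ℝ)*((y-a)*(y-x)))
        = (Λ:ℝ) * ((a*x)*((a+b)/2-x) + (-(a+x))*(((a+b)/2)^2-x^2)/2
            + 1*(((a+b)/2)^3-x^3)/3) := by
      rw [intervalIntegral.integral_const_mul, int_lin2]
    have v3 : (∫ y in ((a+b)/2)..b, (Λ:ℝ)*((y-x)*(b-y)))
        = (Λ:ℝ) * ((-(x*b))*(b-(a+b)/2) + (x+b)*(b^2-((a+b)/2)^2)/2
            + (-1)*(b^3-((a+b)/2)^3)/3) := by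
      rw [intervalIntegral.integral_const_mul, int_lin]
    rw [v1] at hb1; rw [v2] at hb2; rw [v3] at hb3
    have hTL : |TL| ≤ (Λ:ℝ) * ((-(a*x))*(x-a) + (a+x)*(x^2-a^2)/2 + (-1)*(x^3-a^3)/3)
        + (Λ:ℝ) * ((a*x)*((a+b)/2-x) + (-(a+x))*(((a+b)/2)^2-x^2)/2
            + 1*(((a+b)/2)^3-x^3)/3) := by
      rw [← tsplit]
      exact (abs_add_le _ _).trans (add_le_add hb1 hb2)
    have hcert : 0 ≤ (Λ:ℝ) * ((x-a) * ((b-a)^2/4 - (x-a)^2/3)) := by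
      have hq : 0 ≤ (b-a)^2/4 - (x-a)^2/3 := by
        have h1 : (x-a)^2 ≤ ((b-a)/2)^2 := by
          apply sq_le_sq' <;> linarith
        linarith [h1, sq_nonneg (x-a), sq_nonneg (b-a)]
      exact mul_nonneg hΛ0 (mul_nonneg (by linarith) hq)
    calc |u' x| * ((b-a)^2/4) = |u' x * ((b-a)^2/4)| := hmulabs
      _ = |(IB - IA) - TL - TR| := by rw [MAIN]
      _ ≤ |IB| + |IA| + |TL| + |TR| := habs3
      _ ≤ (∫ t in a..b, |u t|) + ((Λ:ℝ) * (b-a)^3/8) := by linarith [habsA, habsB, hsplit, hTL, hb3, hcert]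
  · -- x in the right half
    have tsplit : (∫ y in ((a+b)/2)..x, (b-y)*(u' y - u' x))
        + (∫ y in x..b, (b-y)*(u' y - u' x)) = TR :=
      intervalIntegral.integral_add_adjacent_intervals (intg _ _ _ hac hxc hxb hcdiff')
        (intg _ _ _ (hac.trans hxc) hxb le_rfl hcdiff')
    have hb1 : |TL| ≤ ∫ y in a..(a+b)/2, (Λ:ℝ)*((y-a)*(x-y)) := by
      apply hbound a ((a+b)/2) (fun y => y - a) (fun y => (y-a)*(x-y)) le_rfl hac hcb (by fun_prop) (by fun_prop)
      intro y hy
      beta_reduce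
      have h1 := hlipp y ⟨hy.1, hy.2.trans hcb⟩
      rw [abs_of_nonpos (by linarith [hy.2, hxc] : y - x ≤ 0)] at h1
      rw [abs_mul, abs_of_nonneg (by linarith [hy.1] : (0:ℝ) ≤ y - a)]
      calc (y-a) * |u' y - u' x| ≤ (y-a) * ((Λ:ℝ)*(-(y-x))) :=
            mul_le_mul_of_nonneg_left h1 (by linarith [hy.1])
        _ = (Λ:ℝ) * ((y-a)*(x-y)) := by ring
    have hb2 : |∫ y in ((a+b)/2)..x, (b-y)*(u' y - u' x)|
        ≤ ∫ y in ((a+b)/2)..x, (Λ:ℝ)*((y-b)*(y-x)) := by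
      apply hbound ((a+b)/2) x (fun y => b - y) (fun y => (y-b)*(y-x)) hac hxc hxb (by fun_prop) (by fun_prop)
      intro y hy
      beta_reduce
      have h1 := hlipp y ⟨hac.trans hy.1, hy.2.trans hxb⟩
      rw [abs_of_nonpos (by linarith [hy.2] : y - x ≤ 0)] at h1
      rw [abs_mul, abs_of_nonneg (by linarith [hy.2, hxb] : (0:ℝ) ≤ b - y)]
      calc (b-y) * |u' y - u' x| ≤ (b-y) * ((Λ:ℝ)*(-(y-x))) :=
            mul_le_mul_of_nonneg_left h1 (by linarith [hy.2, hxb])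
        _ = (Λ:ℝ) * ((y-b)*(y-x)) := by ring
    have hb3 : |∫ y in x..b, (b-y)*(u' y - u' x)|
        ≤ ∫ y in x..b, (Λ:ℝ)*((y-x)*(b-y)) := by
      apply hbound x b (fun y => b - y) (fun y => (y-x)*(b-y)) (hac.trans hxc) hxb le_rfl (by fun_prop) (by fun_prop)
      intro y hy
      beta_reduce
      have h1 := hlipp y ⟨(hac.trans hxc).trans hy.1, hy.2⟩
      rw [abs_of_nonneg (by linarith [hy.1] : (0:ℝ) ≤ y - x)] at h1
      rw [abs_mul, abs_of_nonneg (by linarith [hy.2] : (0:ℝ) ≤ b - y)]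
      calc (b-y) * |u' y - u' x| ≤ (b-y) * ((Λ:ℝ)*(y-x)) :=
            mul_le_mul_of_nonneg_left h1 (by linarith [hy.2])
        _ = (Λ:ℝ) * ((y-x)*(b-y)) := by ring
    have v1 : (∫ y in a..(a+b)/2, (Λ:ℝ)*((y-a)*(x-y)))
        = (Λ:ℝ) * ((-(a*x))*((a+b)/2-a) + (a+x)*(((a+b)/2)^2-a^2)/2
            + (-1)*(((a+b)/2)^3-a^3)/3) := by
      rw [intervalIntegral.integral_const_mul, int_lin]
    have v2 : (∫ y in ((a+b)/2)..x, (Λ:ℝ)*((y-b)*(y-x)))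
        = (Λ:ℝ) * ((b*x)*(x-(a+b)/2) + (-(b+x))*(x^2-((a+b)/2)^2)/2
            + 1*(x^3-((a+b)/2)^3)/3) := by
      rw [intervalIntegral.integral_const_mul, int_lin2]
    have v3 : (∫ y in x..b, (Λ:ℝ)*((y-x)*(b-y)))
        = (Λ:ℝ) * ((-(x*b))*(b-x) + (x+b)*(b^2-x^2)/2 + (-1)*(b^3-x^3)/3) := by
      rw [intervalIntegral.integral_const_mul, int_lin]
    rw [v1] at hb1; rw [v2] at hb2; rw [v3] at hb3
    have hTR : |TR| ≤ (Λ:ℝ) * ((b*x)*(x-(a+b)/2) + (-(b+x))*(x^2-((a+b)/2)^2)/2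
            + 1*(x^3-((a+b)/2)^3)/3)
        + (Λ:ℝ) * ((-(x*b))*(b-x) + (x+b)*(b^2-x^2)/2 + (-1)*(b^3-x^3)/3) := by
      rw [← tsplit]
      exact (abs_add_le _ _).trans (add_le_add hb2 hb3)
    have hcert : 0 ≤ (Λ:ℝ) * ((b-x) * ((b-a)^2/4 - (b-x)^2/3)) := by
      have hq : 0 ≤ (b-a)^2/4 - (b-x)^2/3 := by
        have h1 : (b-x)^2 ≤ ((b-a)/2)^2 := by
          apply sq_le_sq' <;> linarith
        linarith [h1, sq_nonneg (b-x), sq_nonneg (b-a)]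
      exact mul_nonneg hΛ0 (mul_nonneg (by linarith) hq)
    calc |u' x| * ((b-a)^2/4) = |u' x * ((b-a)^2/4)| := hmulabs
      _ = |(IB - IA) - TL - TR| := by rw [MAIN]
      _ ≤ |IB| + |IA| + |TL| + |TR| := habs3
      _ ≤ (∫ t in a..b, |u t|) + ((Λ:ℝ) * (b-a)^3/8) := by linarith [habsA, habsB, hsplit, hTR, hb1, hcert]

private lemma key2 (s : ℝ) (hs : 0 < s) (u u' : ℝ → ℝ) (Λ : NNReal)
    (hderiv : ∀ x ∈ Set.Icc 0 s, HasDerivWithinAt u (u' x) (Set.Icc 0 s) x)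
    (hlip : LipschitzOnWith Λ u' (Set.Icc 0 s))
    (x : ℝ) (hx : x ∈ Set.Icc 0 s) (h : ℝ) (hh0 : 0 < h) (hhs : h ≤ s) :
    |u' x| ≤ 4/h^2 * (∫ t in (0:ℝ)..s, |u t|) + (Λ:ℝ)*h/2 := by
  have huc : ContinuousOn u (Set.Icc 0 s) := fun z hz => (hderiv z hz).continuousWithinAt
  have hintabs : ∀ l r : ℝ, 0 ≤ l → l ≤ r → r ≤ s →
      IntervalIntegrable (fun t => |u t|) volume l r := by
    intro l r h1 h2 h3
    apply ContinuousOn.intervalIntegrable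
    rw [Set.uIcc_of_le h2]
    exact (huc.mono (Set.Icc_subset_Icc h1 h3)).abs
  set a := min x (s - h) with hadef
  have ha0 : 0 ≤ a := le_min hx.1 (by linarith)
  have hxa : a ≤ x := min_le_left _ _
  have hash : a + h ≤ s := by
    have := min_le_right x (s - h); linarith
  have hxb : x ≤ a + h := by
    rcases le_total x (s - h) with hc | hc
    · have hax : a = x := min_eq_left hc
      rw [hax]; linarith
    · have hae : a = s - h := min_eq_right hc
      have := hx.2
      rw [hae]; linarith
  have hK := key s u u' Λ hderiv hlip a (a+h) x ha0 hash (by linarith) hxa hxb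
  rw [show a + h - a = h from by ring] at hK
  have e1 : (∫ t in (0:ℝ)..a, |u t|) + (∫ t in a..(a+h), |u t|)
      = ∫ t in (0:ℝ)..(a+h), |u t| :=
    intervalIntegral.integral_add_adjacent_intervals (hintabs 0 a le_rfl ha0 (by linarith))
      (hintabs a (a+h) ha0 (by linarith) hash)
  have e2 : (∫ t in (0:ℝ)..(a+h), |u t|) + (∫ t in (a+h)..s, |u t|)
      = ∫ t in (0:ℝ)..s, |u t| :=
    intervalIntegral.integral_add_adjacent_intervals
      (hintabs 0 (a+h) le_rfl (by linarith) hash)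
      (hintabs (a+h) s (by linarith) hash le_rfl)
  have n1 : 0 ≤ ∫ t in (0:ℝ)..a, |u t| :=
    intervalIntegral.integral_nonneg ha0 (fun t _ => abs_nonneg _)
  have n2 : 0 ≤ ∫ t in (a+h)..s, |u t| :=
    intervalIntegral.integral_nonneg hash (fun t _ => abs_nonneg _)
  have h24 : (0:ℝ) < h^2/4 := by positivity
  have H2 : |u' x| ≤ ((∫ t in (0:ℝ)..s, |u t|) + (Λ:ℝ)*h^3/8) / (h^2/4) := by
    rw [le_div_iff₀ h24]
    calc |u' x| * (h^2/4) ≤ (∫ t in a..(a+h), |u t|) + (Λ:ℝ)*(h)^3/8 := hK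
      _ ≤ _ := by linarith
  calc |u' x| ≤ ((∫ t in (0:ℝ)..s, |u t|) + (Λ:ℝ)*h^3/8) / (h^2/4) := H2
    _ = 4/h^2 * (∫ t in (0:ℝ)..s, |u t|) + (Λ:ℝ)*h/2 := by
      field_simp
      ring

/-- Interpolation inequality: if u ∈ C^{1,1}([0,s]) (u' is a derivative of u on
[0,s] which is Λ-Lipschitz there, Λ being the L^∞ norm of u''), then
‖u'‖_{C⁰} ≤ 2‖u‖_{L¹}^{1/3}Λ^{2/3} + (4/s²)‖u‖_{L¹}. -/
theorem stmt8 (s : ℝ) (hs : 0 < s) (u u' : ℝ → ℝ) (Λ : NNReal)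
    (hderiv : ∀ x ∈ Set.Icc 0 s, HasDerivWithinAt u (u' x) (Set.Icc 0 s) x)
    (hlip : LipschitzOnWith Λ u' (Set.Icc 0 s)) :
    ∀ x ∈ Set.Icc 0 s,
      |u' x| ≤ 2 * (∫ t in (0:ℝ)..s, |u t|) ^ ((1:ℝ)/3) * (Λ:ℝ) ^ ((2:ℝ)/3)
        + (4/s^2) * ∫ t in (0:ℝ)..s, |u t| := by
  intro x hx
  have hL0 : 0 ≤ ∫ t in (0:ℝ)..s, |u t| :=
    intervalIntegral.integral_nonneg hs.le (fun t _ => abs_nonneg _)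
  set L := ∫ t in (0:ℝ)..s, |u t| with hLdef
  have hΛ0 : (0:ℝ) ≤ (Λ:ℝ) := Λ.2
  rcases eq_or_lt_of_le hΛ0 with hΛz | hΛpos
  · -- Λ = 0
    have hK := key2 s hs u u' Λ hderiv hlip x hx s hs le_rfl
    have hz23 : ((Λ:ℝ)) ^ ((2:ℝ)/3) = 0 := by
      rw [← hΛz]; exact Real.zero_rpow (by norm_num)
    have hz : (Λ:ℝ)*s/2 = 0 := by rw [← hΛz]; ring
    rw [hz23]
    linarith [hK, hz]
  rcases eq_or_lt_of_le hL0 with hLz | hLpos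
  · -- L = 0
    have hzero : |u' x| ≤ 0 := by
      by_contra hpos
      push_neg at hpos
      have hh0 : 0 < min s (|u' x|/(Λ:ℝ)) := lt_min hs (by positivity)
      have hK := key2 s hs u u' Λ hderiv hlip x hx _ hh0 (min_le_left _ _)
      rw [← hLdef, ← hLz] at hK
      have hm : (Λ:ℝ) * min s (|u' x|/(Λ:ℝ)) ≤ |u' x| := by
        calc (Λ:ℝ) * min s (|u' x|/(Λ:ℝ)) ≤ (Λ:ℝ) * (|u' x|/(Λ:ℝ)) :=
              mul_le_mul_of_nonneg_left (min_le_right _ _) hΛ0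
          _ = |u' x| := by field_simp
      linarith [hK, hm, hpos]
    have h13 : (0:ℝ) ^ ((1:ℝ)/3) = 0 := Real.zero_rpow (by norm_num)
    rw [← hLz, h13]
    linarith [hzero]
  · -- main case : L > 0, Λ > 0
    set P := L ^ ((1:ℝ)/3) with hPdef
    set Q := ((Λ:ℝ)) ^ ((1:ℝ)/3) with hQdef
    have hP0 : 0 < P := Real.rpow_pos_of_pos hLpos _
    have hQ0 : 0 < Q := Real.rpow_pos_of_pos hΛpos _
    have hP3 : P^3 = L := by
      rw [hPdef, ← Real.rpow_natCast (L ^ ((1:ℝ)/3)) 3, ← Real.rpow_mul hL0]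
      norm_num
    have hQ3 : Q^3 = (Λ:ℝ) := by
      rw [hQdef, ← Real.rpow_natCast (((Λ:ℝ)) ^ ((1:ℝ)/3)) 3, ← Real.rpow_mul hΛ0]
      norm_num
    have hQ2 : ((Λ:ℝ)) ^ ((2:ℝ)/3) = Q^2 := by
      rw [hQdef, ← Real.rpow_natCast (((Λ:ℝ)) ^ ((1:ℝ)/3)) 2, ← Real.rpow_mul hΛ0]
      norm_num
    rw [hQ2]
    rcases le_total (2*P/Q) s with hcase | hcase
    · have hh0 : 0 < 2*P/Q := by positivity
      have hK := key2 s hs u u' Λ hderiv hlip x hx (2*P/Q) hh0 hcase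
      have heq : 4/(2*P/Q)^2 * L + (Λ:ℝ)*(2*P/Q)/2 = 2 * P * Q^2 := by
        rw [← hP3, ← hQ3]; field_simp; ring
      have h4s : 0 ≤ 4/s^2 * L := by positivity
      calc |u' x| ≤ 4/(2*P/Q)^2 * L + (Λ:ℝ)*(2*P/Q)/2 := hK
        _ = 2 * P * Q^2 := heq
        _ ≤ 2 * P * Q^2 + 4/s^2 * L := by linarith
    · have hK := key2 s hs u u' Λ hderiv hlip x hx s hs le_rfl
      have hQs : s * Q ≤ 2 * P := (le_div_iff₀ hQ0).mp hcase
      have h1 : Q^2 * (Q*s) ≤ Q^2 * (2*P) := by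
        apply mul_le_mul_of_nonneg_left _ (sq_nonneg Q)
        linarith
      have hs2 : (Λ:ℝ)*s/2 ≤ 2 * P * Q^2 := by
        rw [← hQ3]
        linarith [h1, mul_nonneg hP0.le (sq_nonneg Q)]
      calc |u' x| ≤ 4/s^2*L + (Λ:ℝ)*s/2 := hK
        _ ≤ 2*P*Q^2 + 4/s^2 * L := by linarith
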